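/- The pushout, in the category of topological spaces, of two copies of the closed unit disk D² along the inclusion of their common boundary circle S¹ (i.e., the double of D² along its boundary) is homeomorphic to the 2-sphere S². -/

import Mathlib

open CategoryTheory Limits Metric

/-- The inclusion of the boundary circle `S¹` into the closed unit disk `D²`,
as a morphism in `TopCat`. -/
noncomputable def boundaryCircleIncl :
    TopCat.of (sphere (0 : EuclideanSpace ℝ (Fin 2)) 1) ⟶
      TopCat.of (closedBall (0 : EuclideanSpace ℝ (Fin 2)) 1) :=
  TopCat.ofHom ⟨Set.inclusion sphere_subset_closedBall, continuous_inclusion _⟩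

namespace DoubleDisk

noncomputable section

/-- the cap map: include the disk into the sphere as upper (ε = 1) or lower (ε = -1) hemisphere -/
def cap (ε : ℝ) (x : EuclideanSpace ℝ (Fin 2)) : EuclideanSpace ℝ (Fin 3) :=
  (WithLp.equiv 2 (Fin 3 → ℝ)).symm ![x 0, x 1, ε * Real.sqrt (1 - ‖x‖^2)]

lemma cap_two (ε : ℝ) (x : EuclideanSpace ℝ (Fin 2)) :
    cap ε x 2 = ε * Real.sqrt (1 - ‖x‖^2) := rfl

lemma continuous_cap (ε : ℝ) : Continuous (cap ε) := by
  apply (PiLp.continuous_toLp 2 (fun _ : Fin 3 => ℝ)).comp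
  apply continuous_pi
  intro i
  fin_cases i <;> simp <;> fun_prop

lemma sq_norm_two (x : EuclideanSpace ℝ (Fin 2)) : ‖x‖^2 = x 0^2 + x 1^2 := by
  rw [EuclideanSpace.norm_eq, Real.sq_sqrt (by positivity), Fin.sum_univ_two]
  simp [sq_abs]

lemma sq_norm_three (y : EuclideanSpace ℝ (Fin 3)) : ‖y‖^2 = y 0^2 + y 1^2 + y 2^2 := by
  rw [EuclideanSpace.norm_eq, Real.sq_sqrt (by positivity), Fin.sum_univ_three]
  simp [sq_abs]

lemma norm_cap (ε : ℝ) (hε : ε = 1 ∨ ε = -1) (x : EuclideanSpace ℝ (Fin 2)) (h : ‖x‖ ≤ 1) :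
    ‖cap ε x‖ = 1 := by
  have h2 : (0:ℝ) ≤ 1 - ‖x‖^2 := by nlinarith [norm_nonneg x]
  have hsq : ‖cap ε x‖^2 = 1 := by
    rw [sq_norm_three]
    have h0 : cap ε x 0 = x 0 := rfl
    have h1 : cap ε x 1 = x 1 := rfl
    rw [h0, h1, cap_two, mul_pow, Real.sq_sqrt h2]
    have hε2 : ε^2 = 1 := by rcases hε with h | h <;> rw [h] <;> norm_num
    rw [hε2, sq_norm_two x]
    ring
  nlinarith [norm_nonneg (cap ε x)]

/-- projection to the first two coordinates -/
def proj (y : EuclideanSpace ℝ (Fin 3)) : EuclideanSpace ℝ (Fin 2) :=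
  (WithLp.equiv 2 (Fin 2 → ℝ)).symm ![y 0, y 1]

lemma continuous_proj : Continuous proj := by
  apply (PiLp.continuous_toLp 2 (fun _ : Fin 2 => ℝ)).comp
  apply continuous_pi
  intro i
  fin_cases i <;> simp <;>
    exact (continuous_apply _).comp (PiLp.continuous_ofLp 2 (fun _ : Fin 3 => ℝ))

lemma continuous_coord2 :
    Continuous (fun y : EuclideanSpace ℝ (Fin 3) => y 2) :=
  (continuous_apply _).comp (PiLp.continuous_ofLp 2 (fun _ : Fin 3 => ℝ))

lemma sq_norm_proj (y : EuclideanSpace ℝ (Fin 3)) (h : ‖y‖ = 1) :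
    ‖proj y‖^2 = 1 - y 2^2 := by
  have h3 := sq_norm_three y
  rw [h] at h3
  have h0 : proj y 0 = y 0 := rfl
  have h1 : proj y 1 = y 1 := rfl
  rw [sq_norm_two, h0, h1]
  nlinarith

lemma norm_proj_le (y : EuclideanSpace ℝ (Fin 3)) (h : ‖y‖ = 1) : ‖proj y‖ ≤ 1 := by
  nlinarith [sq_norm_proj y h, norm_nonneg (proj y), sq_nonneg (y 2)]

lemma proj_cap (ε : ℝ) (x : EuclideanSpace ℝ (Fin 2)) : proj (cap ε x) = x := by
  ext i
  fin_cases i <;> rfl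

lemma cap_one_proj (y : EuclideanSpace ℝ (Fin 3)) (h : ‖y‖ = 1) (h2 : 0 ≤ y 2) :
    cap 1 (proj y) = y := by
  ext i
  fin_cases i
  · rfl
  · rfl
  · show cap 1 (proj y) 2 = y 2
    rw [cap_two, one_mul, sq_norm_proj y h]
    rw [show 1 - (1 - y 2^2) = y 2^2 by ring, Real.sqrt_sq h2]

lemma cap_neg_proj (y : EuclideanSpace ℝ (Fin 3)) (h : ‖y‖ = 1) (h2 : y 2 ≤ 0) :
    cap (-1) (proj y) = y := by
  ext i
  fin_cases i
  · rfl
  · rfl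
  · show cap (-1) (proj y) 2 = y 2
    rw [cap_two, sq_norm_proj y h]
    rw [show 1 - (1 - y 2^2) = (-(y 2))^2 by ring, Real.sqrt_sq (by linarith)]
    ring

lemma cap_mem_sphere (ε : ℝ) (hε : ε = 1 ∨ ε = -1)
    (x : closedBall (0 : EuclideanSpace ℝ (Fin 2)) 1) :
    cap ε x.1 ∈ sphere (0 : EuclideanSpace ℝ (Fin 3)) 1 :=
  mem_sphere_zero_iff_norm.2 (norm_cap ε hε _ (mem_closedBall_zero_iff.1 x.2))

/-- the cap map as a morphism in `TopCat` -/
def capHom (ε : ℝ) (hε : ε = 1 ∨ ε = -1) :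
    TopCat.of (closedBall (0 : EuclideanSpace ℝ (Fin 2)) 1) ⟶
      TopCat.of (sphere (0 : EuclideanSpace ℝ (Fin 3)) 1) :=
  TopCat.ofHom (ContinuousMap.mk (fun x => ⟨cap ε x.1, cap_mem_sphere ε hε x⟩)
    (Continuous.subtype_mk ((continuous_cap ε).comp continuous_subtype_val) _))

lemma capHom_w :
    boundaryCircleIncl ≫ capHom 1 (Or.inl rfl) =
      boundaryCircleIncl ≫ capHom (-1) (Or.inr rfl) := by
  apply TopCat.hom_ext; apply ContinuousMap.ext; intro x
  apply Subtype.ext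
  show cap 1 x.1 = cap (-1) x.1
  have hx : ‖x.1‖ = 1 := mem_sphere_zero_iff_norm.1 x.2
  ext i
  fin_cases i
  · rfl
  · rfl
  · show cap 1 x.1 2 = cap (-1) x.1 2
    rw [cap_two, cap_two, hx]
    norm_num

/-- the projection as a map from the sphere to the disk -/
def projD (y : sphere (0 : EuclideanSpace ℝ (Fin 3)) 1) :
    closedBall (0 : EuclideanSpace ℝ (Fin 2)) 1 :=
  ⟨proj y.1, mem_closedBall_zero_iff.2 (norm_proj_le _ (mem_sphere_zero_iff_norm.1 y.2))⟩

def descFun (s : PushoutCocone boundaryCircleIncl boundaryCircleIncl)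
    (y : sphere (0 : EuclideanSpace ℝ (Fin 3)) 1) : s.pt :=
  if (0:ℝ) ≤ y.1 2 then s.inl (projD y) else s.inr (projD y)

lemma inl_eq_inr_on_sphere (s : PushoutCocone boundaryCircleIncl boundaryCircleIncl)
    (x : closedBall (0 : EuclideanSpace ℝ (Fin 2)) 1)
    (hx : ‖(x : EuclideanSpace ℝ (Fin 2))‖ = 1) :
    s.inl x = s.inr x := by
  have hmem : (x : EuclideanSpace ℝ (Fin 2)) ∈ sphere (0 : EuclideanSpace ℝ (Fin 2)) 1 :=
    mem_sphere_zero_iff_norm.2 hx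
  exact ConcreteCategory.congr_hom s.condition
    (⟨x.1, hmem⟩ : sphere (0 : EuclideanSpace ℝ (Fin 2)) 1)

lemma continuous_descFun (s : PushoutCocone boundaryCircleIncl boundaryCircleIncl) :
    Continuous (descFun s) := by
  apply Continuous.if_le
  · exact s.inl.hom.continuous.comp
      (Continuous.subtype_mk (continuous_proj.comp continuous_subtype_val) _)
  · exact s.inr.hom.continuous.comp
      (Continuous.subtype_mk (continuous_proj.comp continuous_subtype_val) _)
  · exact continuous_const
  · exact continuous_coord2.comp continuous_subtype_val
  · intro y hy
    apply inl_eq_inr_on_sphere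
    show ‖proj y.1‖ = 1
    have h1 : ‖proj y.1‖^2 = 1 := by
      rw [sq_norm_proj y.1 (mem_sphere_zero_iff_norm.1 y.2), ← hy]
      norm_num
    nlinarith [norm_nonneg (proj y.1)]

def desc (s : PushoutCocone boundaryCircleIncl boundaryCircleIncl) :
    TopCat.of (sphere (0 : EuclideanSpace ℝ (Fin 3)) 1) ⟶ s.pt :=
  TopCat.ofHom (ContinuousMap.mk (descFun s) (continuous_descFun s))

lemma fac_left (s : PushoutCocone boundaryCircleIncl boundaryCircleIncl) :
    capHom 1 (Or.inl rfl) ≫ desc s = s.inl := by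
  ext x
  show descFun s (capHom 1 (Or.inl rfl) x) = s.inl x
  have hpos : (0:ℝ) ≤ (capHom 1 (Or.inl rfl) x).1 2 := by
    show (0:ℝ) ≤ cap 1 x.1 2
    rw [cap_two, one_mul]
    exact Real.sqrt_nonneg _
  rw [descFun, if_pos hpos]
  congr 1
  exact Subtype.ext (proj_cap 1 x.1)

lemma fac_right (s : PushoutCocone boundaryCircleIncl boundaryCircleIncl) :
    capHom (-1) (Or.inr rfl) ≫ desc s = s.inr := by
  ext x
  show descFun s (capHom (-1) (Or.inr rfl) x) = s.inr x
  have hproj : projD (capHom (-1) (Or.inr rfl) x) = x := Subtype.ext (proj_cap (-1) x.1)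
  rw [descFun]
  by_cases hpos : (0:ℝ) ≤ (capHom (-1) (Or.inr rfl) x).1 2
  · rw [if_pos hpos, hproj]
    -- on the boundary: the third coordinate is both ≤ 0 and ≥ 0, so x is on the circle
    have hc : cap (-1) x.1 2 = -Real.sqrt (1 - ‖x.1‖^2) := by rw [cap_two]; ring
    have hle : ‖x.1‖ ≤ 1 := mem_closedBall_zero_iff.1 x.2
    have h0 : Real.sqrt (1 - ‖x.1‖^2) = 0 := by
      have h' := hpos
      rw [show (capHom (-1) (Or.inr rfl) x).1 2 = cap (-1) x.1 2 from rfl, hc] at h'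
      have hnn := Real.sqrt_nonneg (1 - ‖x.1‖^2)
      linarith
    have hx : ‖x.1‖ = 1 := by
      have h2 : 1 - ‖x.1‖^2 = 0 := by
        by_contra hne
        have hlt : 0 < 1 - ‖x.1‖^2 :=
          lt_of_le_of_ne (by nlinarith [norm_nonneg x.1]) (Ne.symm hne)
        exact absurd h0 (ne_of_gt (Real.sqrt_pos.2 hlt))
      nlinarith [norm_nonneg (x.1)]
    exact inl_eq_inr_on_sphere s x hx
  · rw [if_neg hpos, hproj]

lemma uniq (s : PushoutCocone boundaryCircleIncl boundaryCircleIncl)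
    (m : TopCat.of (sphere (0 : EuclideanSpace ℝ (Fin 3)) 1) ⟶ s.pt)
    (h1 : capHom 1 (Or.inl rfl) ≫ m = s.inl)
    (h2 : capHom (-1) (Or.inr rfl) ≫ m = s.inr) : m = desc s := by
  ext y
  show m y = descFun s y
  have hy : ‖y.1‖ = 1 := mem_sphere_zero_iff_norm.1 y.2
  rw [descFun]
  by_cases hpos : (0:ℝ) ≤ y.1 2
  · rw [if_pos hpos, ← h1]
    exact congrArg m (Subtype.ext (cap_one_proj y.1 hy hpos)).symm
  · rw [if_neg hpos, ← h2]
    exact congrArg m (Subtype.ext (cap_neg_proj y.1 hy (le_of_not_ge hpos))).symm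

def sphereCocone : PushoutCocone boundaryCircleIncl boundaryCircleIncl :=
  PushoutCocone.mk (capHom 1 (Or.inl rfl)) (capHom (-1) (Or.inr rfl)) capHom_w

def sphereIsColimit : IsColimit sphereCocone :=
  PushoutCocone.IsColimit.mk capHom_w desc fac_left fac_right uniq

end

end DoubleDisk

/-- The double of the closed 2-disk along its boundary circle, i.e. the pushout in `TopCat`
of two copies of the boundary inclusion `S¹ ↪ D²`, is homeomorphic to the 2-sphere `S²`. -/
theorem double_of_disk_homeomorphic_sphere :
    Nonempty ((pushout boundaryCircleIncl boundaryCircleIncl : TopCat) ≃ₜ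
      sphere (0 : EuclideanSpace ℝ (Fin 3)) 1) := by
  exact ⟨TopCat.homeoOfIso (colimit.isoColimitCocone
    ⟨DoubleDisk.sphereCocone, DoubleDisk.sphereIsColimit⟩)⟩
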